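/- arXiv:1001.3461 — 3 statements merged into one kernel-verified Lean document; each statement's English description precedes it below -/
import Mathlib

section
/- Let s ∈ ℝ with s ≠ 0, let b ∈ ℝ and c ∈ ℂ. Then b² + 4|c|² < 1/s² holds if and only if for all x₀, x₁ ∈ ℝ and x₂ ∈ ℂ with (x₀, x₁, x₂) ≠ (0, 0, 0) and s²·x₀² = x₁² + |x₂|², one has x₀ ≠ b·x₁ + 2·Re(c·x₂). -/
open ComplexConjugate

set_option maxHeartbeats 1000000 in
/-- Lemma 4.2: the plane `x₀ − b x₁ − c x₂ − c̄ x₃ = 0` corresponds to a point of the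
hyperbolic space iff it misses all real points of the quadric `Q_s`. -/
theorem stmt_0 (s b : ℝ) (hs : s ≠ 0) (c : ℂ) :
    b ^ 2 + 4 * ‖c‖ ^ 2 < 1 / s ^ 2 ↔
      ∀ (x₀ x₁ : ℝ) (x₂ : ℂ), ¬(x₀ = 0 ∧ x₁ = 0 ∧ x₂ = 0) →
        s ^ 2 * x₀ ^ 2 = x₁ ^ 2 + ‖x₂‖ ^ 2 →
        x₀ ≠ b * x₁ + 2 * (c * x₂).re := by
  have hs2 : (0:ℝ) < s ^ 2 := by positivity
  constructor
  · intro h x₀ x₁ x₂ hne hq heq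
    have hr : ((c * x₂).re) ^ 2 ≤ ‖c‖ ^ 2 * ‖x₂‖ ^ 2 := by
      have h1 : |(c * x₂).re| ≤ ‖c * x₂‖ := Complex.abs_re_le_norm _
      have h2 : ‖c * x₂‖ = ‖c‖ * ‖x₂‖ := norm_mul _ _
      nlinarith [abs_nonneg (c * x₂).re, sq_abs ((c*x₂).re),
        norm_nonneg (c*x₂)]
    by_cases hx0 : x₀ = 0
    · have h1 : x₁ ^ 2 + ‖x₂‖ ^ 2 = 0 := by
        rw [← hq, hx0]; ring
      have hx1 : x₁ = 0 := by nlinarith [sq_nonneg x₁, norm_nonneg x₂, sq_nonneg (‖x₂‖)]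
      have hx2 : ‖x₂‖ = 0 := by
        nlinarith [sq_nonneg x₁, norm_nonneg x₂]
      exact hne ⟨hx0, hx1, norm_eq_zero.mp hx2⟩
    · have hx0sq : (0:ℝ) < x₀ ^ 2 := by positivity
      -- Cauchy-Schwarz: x₀² ≤ D (x₁² + |x₂|²) = D s² x₀² < x₀²
      have hDs : (b ^ 2 + 4 * ‖c‖ ^ 2) * s ^ 2 < 1 := by
        rw [lt_div_iff₀ hs2] at h; linarith
      by_cases hc : c = 0
      · have hr0 : (c * x₂).re = 0 := by simp [hc]
        have hEa : ‖c‖ = 0 := by simp [hc]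
        rw [hr0] at heq
        rw [hEa] at hDs
        have hDs' : b ^ 2 * s ^ 2 < 1 := by nlinarith
        have hx : x₀ ^ 2 = b ^ 2 * x₁ ^ 2 := by rw [heq]; ring
        have h1 : x₁ ^ 2 ≤ s ^ 2 * x₀ ^ 2 := by
          nlinarith [sq_nonneg (‖x₂‖)]
        nlinarith [mul_le_mul_of_nonneg_left h1 (sq_nonneg b),
          mul_lt_mul_of_pos_right hDs' hx0sq]
      · have ha : 0 < ‖c‖ := norm_pos_iff.mpr hc
        set A : ℝ := ‖c‖ ^ 2 with hA
        set r : ℝ := (c * x₂).re with hrr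
        set m2 : ℝ := ‖x₂‖ ^ 2 with hm2
        have hApos : 0 < A := by positivity
        have key : A * x₀ ^ 2 ≤ (b ^ 2 + 4 * A) * (A * x₁ ^ 2 + r ^ 2) := by
          rw [heq]
          nlinarith [sq_nonneg (b * r - 2 * A * x₁)]
        have key2 : A * x₁ ^ 2 + r ^ 2 ≤ A * (x₁ ^ 2 + m2) := by nlinarith [hr]
        have key2' : (b ^ 2 + 4 * A) * (A * x₁ ^ 2 + r ^ 2) ≤
            (b ^ 2 + 4 * A) * (A * (x₁ ^ 2 + m2)) :=
          mul_le_mul_of_nonneg_left key2 (by positivity)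
        have key3 : A * (x₁ ^ 2 + m2) = A * (s ^ 2 * x₀ ^ 2) := by rw [← hq]
        have key4 : (b ^ 2 + 4 * A) * s ^ 2 * (A * x₀ ^ 2) < 1 * (A * x₀ ^ 2) :=
          mul_lt_mul_of_pos_right hDs (mul_pos hApos hx0sq)
        nlinarith [key, key2', key3, key4]
  · intro H
    by_contra hlt
    push_neg at hlt
    set D : ℝ := b ^ 2 + 4 * ‖c‖ ^ 2 with hD
    have hDpos : 0 < D := lt_of_lt_of_le (by positivity) hlt
    have hsD : 1 ≤ s ^ 2 * D := by
      rw [div_le_iff₀ hs2] at hlt; nlinarith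
    by_cases hc : c = 0
    · -- D = b², witness x₀ = b, x₁ = 1, x₂ = √(s²b² - 1)
      have hb2 : s ^ 2 * b ^ 2 - 1 ≥ 0 := by
        simp [hc] at hD; nlinarith
      set r : ℝ := Real.sqrt (s ^ 2 * b ^ 2 - 1) with hr
      have hr2 : r ^ 2 = s ^ 2 * b ^ 2 - 1 := Real.sq_sqrt hb2
      have habs : ‖(r : ℂ)‖ ^ 2 = r ^ 2 := by
        rw [Complex.norm_real, Real.norm_eq_abs, sq_abs]
      refine H b 1 (r : ℂ) (by simp) ?_ ?_
      · rw [habs, hr2]; ring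
      · simp [hc]
    · -- witness x₀ = D, x₁ = b, x₂ = (2 + u i) * conj c
      have ha : 0 < ‖c‖ := norm_pos_iff.mpr hc
      set u : ℝ := Real.sqrt (D * (s ^ 2 * D - 1)) / ‖c‖ with hu
      have hu2 : u ^ 2 * ‖c‖ ^ 2 = D * (s ^ 2 * D - 1) := by
        have h1 : Real.sqrt (D * (s ^ 2 * D - 1)) ^ 2 = D * (s ^ 2 * D - 1) :=
          Real.sq_sqrt (mul_nonneg hDpos.le (by linarith))
        rw [hu, div_pow, div_mul_cancel₀ _ (pow_ne_zero 2 (ne_of_gt ha))]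
        exact h1
      set x₂ : ℂ := (2 + u * Complex.I) * conj c with hx2
      have hx2ne : x₂ ≠ 0 := by
        rw [hx2]
        apply mul_ne_zero
        · intro hz
          have := congrArg Complex.re hz
          simp at this
        · simpa using hc
      have habs2 : ‖x₂‖ ^ 2 = (4 + u ^ 2) * ‖c‖ ^ 2 := by
        rw [hx2, Complex.sq_norm, Complex.sq_norm, Complex.normSq_mul,
          Complex.normSq_conj]
        congr 1
        simp [Complex.normSq_apply]
        ring
      have hre : (c * x₂).re = 2 * Complex.normSq c := by
        rw [hx2]
        have : c * ((2 + u * Complex.I) * conj c) = (2 + u * Complex.I) * (c * conj c) := by ring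
        rw [this, Complex.mul_conj]
        simp
      have hnsq : Complex.normSq c = ‖c‖ ^ 2 := (Complex.sq_norm c).symm
      refine H D b x₂ (fun ⟨_, _, h2⟩ => hx2ne h2) ?_ ?_
      · rw [habs2]; nlinarith
      · rw [hre, hnsq]; ring
end

section
/- Let n ≥ 1 be an integer, d, t, c ∈ ℂ with |c| = 1, and r ∈ ℝ with 0 < r < 1, and assume 1 + r·d̄·t ≠ 0 and r + d̄·t ≠ 0. Define ξ(t) = c·(√((1+|d|²)(1−r²)))ⁿ · tⁿ / ((1 + r·d̄·t)·(r + d̄·t)^{n−1}) and η(t) = c⁻¹·(√((1+|d|²)(1−r²)))ⁿ / ((1 + r·d̄·t)^{n−1}·(r + d̄·t)). Then ξ(t)·η(t) = (u(t) − v(t))ⁿ, where u(t) = (d − r t)/(1 + r d̄ t) and v(t) = (r d − t)/(r + d̄ t). Hence the curve L(d,r,c) lies on the variety X₀ = {x y = (u−v)ⁿ z²} (in the chart z = 1). -/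
open ComplexConjugate

/-- The lifted curve L(d,r,c) (equation (3.8)) satisfies the equation of the variety
`X₀ = {x y = (u−v)ⁿ z²}` in the chart `z = 1`: `ξ(t)·η(t) = (u(t) − v(t))ⁿ`. -/
theorem stmt_4 (n : ℕ) (hn : 1 ≤ n) (d t c : ℂ) (hc : ‖c‖ = 1)
    (r : ℝ) (hr0 : 0 < r) (hr1 : r < 1)
    (h1 : 1 + (r : ℂ) * conj d * t ≠ 0) (h2 : (r : ℂ) + conj d * t ≠ 0) :
    (c * ((Real.sqrt ((1 + ‖d‖ ^ 2) * (1 - r ^ 2)) : ℝ) : ℂ) ^ n * t ^ n /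
        ((1 + (r : ℂ) * conj d * t) * ((r : ℂ) + conj d * t) ^ (n - 1))) *
      (c⁻¹ * ((Real.sqrt ((1 + ‖d‖ ^ 2) * (1 - r ^ 2)) : ℝ) : ℂ) ^ n /
        ((1 + (r : ℂ) * conj d * t) ^ (n - 1) * ((r : ℂ) + conj d * t)))
      = ((d - (r : ℂ) * t) / (1 + (r : ℂ) * conj d * t)
          - ((r : ℂ) * d - t) / ((r : ℂ) + conj d * t)) ^ n := by
  obtain ⟨m, rfl⟩ : ∃ m, n = m + 1 := ⟨n - 1, (Nat.succ_pred_eq_of_pos hn).symm⟩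
  simp only [Nat.add_sub_cancel]
  have hc0 : c ≠ 0 := by
    intro h; simp [h] at hc
  set s : ℂ := ((Real.sqrt ((1 + ‖d‖ ^ 2) * (1 - r ^ 2)) : ℝ) : ℂ) with hs_def
  set a : ℂ := 1 + (r : ℂ) * conj d * t with ha_def
  set b : ℂ := (r : ℂ) + conj d * t with hb_def
  have hs2 : s ^ 2 = ((1 + ‖d‖ ^ 2 : ℝ) : ℂ) * ((1 - r ^ 2 : ℝ) : ℂ) := by
    rw [hs_def, ← Complex.ofReal_pow,
      Real.sq_sqrt (mul_nonneg (by positivity) (by nlinarith)), Complex.ofReal_mul]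
  have hdd : conj d * d = ((‖d‖ : ℝ) : ℂ) ^ 2 := by
    rw [Complex.conj_mul']
  have key : (d - (r : ℂ) * t) / a - ((r : ℂ) * d - t) / b = t * s ^ 2 / (a * b) := by
    rw [div_sub_div _ _ h1 h2, hs2]
    congr 1
    rw [ha_def, hb_def]
    push_cast
    linear_combination t * (1 - (r : ℂ) ^ 2) * hdd
  clear_value s a b
  rw [key, div_pow, mul_pow, div_mul_div_comm]
  have hnum : c * s ^ (m + 1) * t ^ (m + 1) * (c⁻¹ * s ^ (m + 1))
      = t ^ (m + 1) * (s ^ 2) ^ (m + 1) := by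
    field_simp
    ring
  have hden : (a * b ^ m) * (a ^ m * b) = (a * b) ^ (m + 1) := by ring
  rw [hnum, hden]
end

section
/- Let n ≥ 1 be an integer, v ∈ ℂ with v ≠ 0, and a ∈ ℝ with −1 < a < 0. Set m = |v|², d = a/v̄, r = √(a(1+a)/(a − m)) and t = d/r. Then for any c ∈ ℂ with |c| = 1, the number ξ(t) = c·(√((1+|d|²)(1−r²)))ⁿ · tⁿ / ((1 + r·d̄·t)·(r + d̄·t)^{n−1}) satisfies |ξ(t)|² = −a·(m − a)^{n−1}/(1 + a). -/
open ComplexConjugate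

set_option maxHeartbeats 1000000 in
private lemma aux_key1 (a m : ℝ) (ha0 : a < 0) (h1a : 0 < 1 + a) (hm0 : 0 < m)
    (hma : 0 < m - a) :
    (1 + a ^ 2 / m) * (1 - -(a * (1 + a)) / (m - a)) * (a ^ 2 / m / (-(a * (1 + a)) / (m - a)))
      / ((-(a * (1 + a)) / (m - a) + a ^ 2 / m) ^ 2 / (-(a * (1 + a)) / (m - a))) = m - a := by
  have h1 : m ≠ 0 := hm0.ne'
  have h2 : m - a ≠ 0 := hma.ne'
  have h3 : -(a * (1 + a)) ≠ 0 := by nlinarith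
  have h4 : (1 : ℝ) + a ≠ 0 := h1a.ne'
  have h5 : a ≠ 0 := ha0.ne
  have h6 : m + a ^ 2 ≠ 0 := by positivity
  have e1 : -(a * (1 + a)) / (m - a) + a ^ 2 / m = -a * (m + a ^ 2) / (m * (m - a)) := by
    field_simp; ring
  rw [e1]
  field_simp
  ring

set_option maxHeartbeats 1000000 in
private lemma aux_key2 (a m : ℝ) (ha0 : a < 0) (h1a : 0 < 1 + a) (hm0 : 0 < m)
    (hma : 0 < m - a) :
    (1 + a ^ 2 / m) * (1 - -(a * (1 + a)) / (m - a)) * (a ^ 2 / m / (-(a * (1 + a)) / (m - a)))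
      / (1 + a ^ 2 / m) ^ 2 = -a / (1 + a) := by
  have h1 : m ≠ 0 := hm0.ne'
  have h2 : m - a ≠ 0 := hma.ne'
  have h3 : -(a * (1 + a)) ≠ 0 := by nlinarith
  have h4 : (1 : ℝ) + a ≠ 0 := h1a.ne'
  have h5 : a ≠ 0 := ha0.ne
  have h6 : m + a ^ 2 ≠ 0 := by positivity
  field_simp
  ring

private lemma aux_pow_split (k : ℕ) (x p q : ℝ) (hp : p ≠ 0) (hq : q ≠ 0) :
    x ^ (k + 1) / (p * q ^ k) = (x / p) * (x / q) ^ k := by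
  rw [div_pow, pow_succ]
  field_simp

/-- With `m = |v|²`, `d = a/v̄`, `r = √(a(1+a)/(a−m))`, `t = d/r` and `|c| = 1`, the
ξ-coordinate of L(d,r,c) over the point `(0,v)` satisfies
`|ξ(t)|² = −a(m−a)^{n−1}/(1+a)`. -/
theorem stmt_14 (n : ℕ) (hn : 1 ≤ n) (v : ℂ) (hv : v ≠ 0) (a : ℝ)
    (ha1 : -1 < a) (ha0 : a < 0) (m : ℝ) (hm : m = ‖v‖ ^ 2)
    (d : ℂ) (hd : d = (a : ℂ) / conj v)
    (r : ℝ) (hr : r = Real.sqrt (a * (1 + a) / (a - m)))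
    (t : ℂ) (ht : t = d / (r : ℂ))
    (c : ℂ) (hc : ‖c‖ = 1) :
    ‖(c * ((Real.sqrt ((1 + ‖d‖ ^ 2) * (1 - r ^ 2)) : ℝ) : ℂ) ^ n * t ^ n /
        ((1 + (r : ℂ) * conj d * t) * ((r : ℂ) + conj d * t) ^ (n - 1)))‖ ^ 2
      = -a * (m - a) ^ (n - 1) / (1 + a) := by
  obtain ⟨k, rfl⟩ : ∃ k, n = k + 1 := ⟨n - 1, (Nat.succ_pred_eq_of_pos hn).symm⟩
  have hk : k + 1 - 1 = k := rfl
  simp only [hk]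
  have hm0 : 0 < m := by rw [hm]; exact pow_pos (norm_pos_iff.mpr hv) 2
  have h1a : 0 < 1 + a := by linarith
  have hma : 0 < m - a := by linarith
  have ha : a ≠ 0 := ha0.ne
  have hm' : m ≠ 0 := hm0.ne'
  have hma' : m - a ≠ 0 := hma.ne'
  have h1a' : (1 : ℝ) + a ≠ 0 := h1a.ne'
  have hmpa : 0 < m + a ^ 2 := by positivity
  have hmpa' : m + a ^ 2 ≠ 0 := hmpa.ne'
  have hnal : -(a * (1 + a)) ≠ 0 := by nlinarith
  set D : ℝ := ‖d‖ with hD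
  have hD2 : D ^ 2 = a ^ 2 / m := by
    rw [hD, hd, norm_div, Complex.norm_conj, Complex.norm_real, Real.norm_eq_abs, div_pow, sq_abs, hm]
  have hr2 : r ^ 2 = -(a * (1 + a)) / (m - a) := by
    rw [hr, Real.sq_sqrt]
    · rw [div_eq_div_iff (by linarith) hma']; ring
    · rw [div_nonneg_iff]; right
      constructor <;> nlinarith
  have hr0 : 0 < r := by
    rw [hr]
    apply Real.sqrt_pos.2
    apply div_pos_of_neg_of_neg (by nlinarith) (by linarith)
  have hrr : r ≠ 0 := hr0.ne'
  have hrC : (r : ℂ) ≠ 0 := by exact_mod_cast hrr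
  have hdd : conj d * d = ((D ^ 2 : ℝ) : ℂ) := by
    rw [mul_comm, Complex.mul_conj]
    norm_cast
    rw [hD, Complex.sq_norm]
  have hcd : conj d * t = ((D ^ 2 / r : ℝ) : ℂ) := by
    rw [ht, mul_div_assoc', hdd]
    push_cast
    ring
  have h1' : 1 + (r : ℂ) * conj d * t = ((1 + D ^ 2 : ℝ) : ℂ) := by
    rw [mul_assoc, hcd]
    push_cast
    field_simp
  have h2' : (r : ℂ) + conj d * t = ((r + D ^ 2 / r : ℝ) : ℂ) := by
    rw [hcd]; push_cast; ring
  have habst : ‖t‖ = D / r := by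
    rw [ht, norm_div, Complex.norm_real, Real.norm_eq_abs, abs_of_pos hr0, hD]
  set s : ℝ := Real.sqrt ((1 + D ^ 2) * (1 - r ^ 2)) with hs
  have hs0 : 0 ≤ s := Real.sqrt_nonneg _
  have hXnn : 0 ≤ (1 + D ^ 2) * (1 - r ^ 2) := by
    apply mul_nonneg (by positivity)
    rw [hr2, sub_nonneg, div_le_one hma]
    nlinarith
  have hs2 : s ^ 2 = (1 + D ^ 2) * (1 - r ^ 2) := Real.sq_sqrt hXnn
  have hDr : 0 < r + D ^ 2 / r := by positivity
  -- compute abs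
  rw [norm_div, norm_mul, norm_mul, norm_pow, norm_pow, hc, h1', h2', norm_mul, norm_pow,
    Complex.norm_real, Complex.norm_real, Complex.norm_real, Real.norm_eq_abs, Real.norm_eq_abs, Real.norm_eq_abs, habst,
    abs_of_nonneg hs0, abs_of_nonneg (by positivity : (0:ℝ) ≤ 1 + D ^ 2),
    abs_of_pos hDr, one_mul]
  -- now a real identity
  have key1 : s ^ 2 * (D / r) ^ 2 / ((r + D ^ 2 / r) ^ 2) = m - a := by
    have e2 : (r + D ^ 2 / r) ^ 2 = (r ^ 2 + D ^ 2) ^ 2 / r ^ 2 := by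
      field_simp
    rw [hs2, div_pow, e2, hD2, hr2]
    exact aux_key1 a m ha0 h1a hm0 hma
  have key2 : s ^ 2 * (D / r) ^ 2 / ((1 + D ^ 2) ^ 2) = -a / (1 + a) := by
    rw [hs2, div_pow, hD2, hr2]
    exact aux_key2 a m ha0 h1a hm0 hma
  have lhs_eq : (s ^ (k + 1) * (D / r) ^ (k + 1) / ((1 + D ^ 2) * (r + D ^ 2 / r) ^ k)) ^ 2
      = (s ^ 2 * (D / r) ^ 2 / (1 + D ^ 2) ^ 2)
        * (s ^ 2 * (D / r) ^ 2 / (r + D ^ 2 / r) ^ 2) ^ k := by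
    rw [div_pow, mul_pow, mul_pow, pow_right_comm s (k + 1) 2, pow_right_comm (D / r) (k + 1) 2,
      pow_right_comm (r + D ^ 2 / r) k 2, ← mul_pow (s ^ 2)]
    exact aux_pow_split k _ _ _ (by positivity) (by positivity)
  rw [lhs_eq, key1, key2]
  ring
end
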